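/- Let d be a positive integer and let c : ℝ^d × ℝ^d → ℝ be a symmetric kernel for which there exist constants L > 0 and α ∈ (0, 1] such that |c(x, y) − c(x, z)| ≤ L·‖y − z‖₂^α for all x, y, z ∈ ℝ^d. Let R̃ > 0 and 0 < ε ≤ R̃, let B ⊆ ℝ^d be a finite set of cardinality at most (1 + 2R̃/ε)^d such that every point of the closed Euclidean ball of radius R̃ centered at the origin lies within Euclidean distance ε of some point of B, and let ω be the map sending each x in that ball to a closest point of B (ties broken arbitrarily), so that ‖x − ω(x)‖₂ ≤ ε. Define c̃(x, y) := c(ω(x), ω(y)) − c(ω(x), y) − c(x, ω(y)) + c(x, y) and d_{c̃}(x, y) := √(c̃(x,x) − 2·c̃(x,y) + c̃(y,y)) (with √ the real square root, equal to 0 on negative inputs). Then for every δ with 0 < δ ≤ √(8·L·ε^α), there exists a finite set M of cardinality at most (7·L^{1/2}·R̃^{α/2}/δ)^{2d/α} such that every x in the closed ball of radius R̃ has some y ∈ M with d_{c̃}(x, y) ≤ δ. -/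

import Mathlib

open Metric MeasureTheory Set
open scoped ENNReal


open Metric MeasureTheory Set
open scoped ENNReal

private lemma pack_card {d : ℕ} (b : EuclideanSpace ℝ (Fin d)) {ε r : ℝ} (hε : 0 < ε)
    (hr : 0 < r) (s : Finset (EuclideanSpace ℝ (Fin d)))
    (hs : ∀ x ∈ s, x ∈ closedBall b ε)
    (hsep : (↑s : Set (EuclideanSpace ℝ (Fin d))).Pairwise fun u v => r < dist u v) :
    (s.card : ℝ) ≤ (1 + 2 * ε / r) ^ d := by
  have hr2 : (0:ℝ) ≤ r / 2 := by linarith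
  have hV0 : (volume (ball (0 : EuclideanSpace ℝ (Fin d)) 1)) ≠ 0 :=
    (measure_ball_pos _ _ one_pos).ne'
  have hVtop : (volume (ball (0 : EuclideanSpace ℝ (Fin d)) 1)) ≠ ⊤ :=
    measure_ball_lt_top.ne
  have hdisj : (↑s : Set (EuclideanSpace ℝ (Fin d))).PairwiseDisjoint
      (fun x => closedBall x (r / 2)) := by
    intro u hu v hv huv
    have h := hsep hu hv huv
    refine Set.disjoint_left.2 fun z hz1 hz2 => ?_
    have : dist u v ≤ r := by
      calc dist u v ≤ dist u z + dist z v := dist_triangle _ _ _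
        _ ≤ r / 2 + r / 2 := by
            have h1 : dist z u ≤ r / 2 := hz1
            have h2 : dist z v ≤ r / 2 := hz2
            rw [dist_comm u z]; linarith
        _ = r := by ring
    linarith
  have hmeas : volume (⋃ x ∈ s, closedBall x (r / 2)) =
      ∑ x ∈ s, volume (closedBall x (r / 2)) :=
    measure_biUnion_finset hdisj fun _ _ => measurableSet_closedBall
  have hball : ∀ x : EuclideanSpace ℝ (Fin d), volume (closedBall x (r / 2)) =
      ENNReal.ofReal ((r / 2) ^ d) * volume (ball (0 : EuclideanSpace ℝ (Fin d)) 1) := by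
    intro x
    rw [Measure.addHaar_closedBall volume x hr2, finrank_euclideanSpace_fin]
  have hsub : (⋃ x ∈ s, closedBall x (r / 2)) ⊆ closedBall b (ε + r / 2) := by
    intro z hz
    simp only [Set.mem_iUnion] at hz
    obtain ⟨x, hx, hzx⟩ := hz
    have hxb : dist x b ≤ ε := hs x hx
    have : dist z x ≤ r / 2 := hzx
    have : dist z b ≤ ε + r / 2 := by
      calc dist z b ≤ dist z x + dist x b := dist_triangle _ _ _
        _ ≤ ε + r / 2 := by linarith
    exact this
  have hbig : volume (closedBall b (ε + r / 2)) =
      ENNReal.ofReal ((ε + r / 2) ^ d) * volume (ball (0 : EuclideanSpace ℝ (Fin d)) 1) := by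
    rw [Measure.addHaar_closedBall volume b (by linarith), finrank_euclideanSpace_fin]
  have key : (s.card : ℝ≥0∞) * (ENNReal.ofReal ((r / 2) ^ d)
        * volume (ball (0 : EuclideanSpace ℝ (Fin d)) 1))
      ≤ ENNReal.ofReal ((ε + r / 2) ^ d) * volume (ball (0 : EuclideanSpace ℝ (Fin d)) 1) := by
    calc (s.card : ℝ≥0∞) * (ENNReal.ofReal ((r / 2) ^ d)
          * volume (ball (0 : EuclideanSpace ℝ (Fin d)) 1))
        = ∑ x ∈ s, volume (closedBall x (r / 2)) := by
          rw [Finset.sum_congr rfl fun x _ => hball x, Finset.sum_const, nsmul_eq_mul]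
      _ = volume (⋃ x ∈ s, closedBall x (r / 2)) := hmeas.symm
      _ ≤ volume (closedBall b (ε + r / 2)) := measure_mono hsub
      _ = _ := hbig
  have key2 : ((s.card : ℝ) * (r / 2) ^ d) ≤ (ε + r / 2) ^ d := by
    have h1 : (s.card : ℝ≥0∞) * ENNReal.ofReal ((r / 2) ^ d)
        ≤ ENNReal.ofReal ((ε + r / 2) ^ d) := by
      rw [← mul_assoc] at key
      exact (ENNReal.mul_le_mul_iff_left hV0 hVtop).1 key
    rw [← ENNReal.ofReal_natCast, ← ENNReal.ofReal_mul (by positivity)] at h1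
    exact (ENNReal.ofReal_le_ofReal_iff (by positivity)).1 h1
  have hp : (0:ℝ) < (r / 2) ^ d := pow_pos (by linarith) d
  rw [← mul_le_mul_iff_of_pos_right hp]
  calc (s.card : ℝ) * (r / 2) ^ d ≤ (ε + r / 2) ^ d := key2
    _ = ((1 + 2 * ε / r) * (r / 2)) ^ d := by
        congr 1
        field_simp
        ring
    _ = (1 + 2 * ε / r) ^ d * (r / 2) ^ d := mul_pow _ _ _



private lemma net_exists {d : ℕ} (b : EuclideanSpace ℝ (Fin d)) {ε r : ℝ} (hε : 0 < ε)
    (hr : 0 < r) (A : Set (EuclideanSpace ℝ (Fin d))) (hA : A ⊆ closedBall b ε) :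
    ∃ t : Finset (EuclideanSpace ℝ (Fin d)), ↑t ⊆ A ∧ (t.card : ℝ) ≤ (1 + 2 * ε / r) ^ d ∧
      ∀ x ∈ A, ∃ y ∈ t, dist x y ≤ r := by
  classical
  set S : Set (Set (EuclideanSpace ℝ (Fin d))) :=
    {u | u ⊆ A ∧ u.Pairwise fun p q => r < dist p q} with hS
  obtain ⟨m, hmax⟩ := zorn_subset S (fun c hcS hchain => by
    refine ⟨⋃₀ c, ⟨?_, ?_⟩, fun s hs => subset_sUnion_of_mem hs⟩
    · exact sUnion_subset fun u hu => (hcS hu).1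
    · intro p hp q hq hpq
      obtain ⟨u, hu, hpu⟩ := hp
      obtain ⟨v, hv, hqv⟩ := hq
      rcases hchain.total hu hv with h | h
      · exact (hcS hv).2 (h hpu) hqv hpq
      · exact (hcS hu).2 hpu (h hqv) hpq)
  have hmS : m ∈ S := hmax.prop
  -- m is finite
  have hmfin : m.Finite := by
    by_contra hinf
    have hinf' : m.Infinite := hinf
    obtain ⟨t, htm, htcard⟩ :=
      hinf'.exists_subset_card_eq (⌈(1 + 2 * ε / r) ^ d⌉₊ + 1)
    have hb := pack_card b hε hr t (fun x hx => hA (hmS.1 (htm hx)))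
      (hmS.2.mono htm)
    rw [htcard] at hb
    have : ((1:ℝ) + 2 * ε / r) ^ d < (⌈(1 + 2 * ε / r) ^ d⌉₊ + 1 : ℕ) := by
      push_cast
      exact lt_of_le_of_lt (Nat.le_ceil _) (by linarith)
    linarith
  refine ⟨hmfin.toFinset, by simpa using hmS.1, ?_, ?_⟩
  · have := pack_card b hε hr hmfin.toFinset
      (fun x hx => hA (hmS.1 (by simpa using hx))) (by simpa using hmS.2)
    exact this
  · intro x hx
    by_cases hxm : x ∈ m
    · exact ⟨x, hmfin.mem_toFinset.2 hxm, by simp [hr.le]⟩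
    · by_contra hcon
      push_neg at hcon
      have hfar : ∀ y ∈ m, r < dist x y := by
        intro y hy
        have := hcon y (hmfin.mem_toFinset.2 hy)
        linarith [this]
      have hins : insert x m ∈ S := by
        constructor
        · exact insert_subset hx hmS.1
        · haveI : Std.Symm (fun p q : EuclideanSpace ℝ (Fin d) => r < dist p q) :=
            ⟨fun p q h => by rwa [dist_comm] at h⟩
          refine hmS.2.insert_of_symm ?_
          intro y hy hxy
          exact hfar y hy
      have := hmax.eq_of_ge hins (subset_insert x m)
      exact hxm (this ▸ mem_insert x m)


private lemma num_ineq {L α ε Rt δ : ℝ} (hL : 0 < L) (hα0 : 0 < α) (hα1 : α ≤ 1)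
    (hε : 0 < ε) (hεR : ε ≤ Rt) (hδ : 0 < δ) (hδ2 : δ ^ 2 ≤ 8 * L * ε ^ α) :
    (1 + 2 * Rt / ε) * (1 + 2 * ε / ((δ ^ 2 / (2 * L)) ^ (1 / α)))
      ≤ (7 * L ^ ((1 : ℝ) / 2) * Rt ^ (α / 2) / δ) ^ (2 / α) := by
  have hRt : 0 < Rt := lt_of_lt_of_le hε hεR
  set β : ℝ := 1 / α with hβ
  have hβ1 : (1 : ℝ) ≤ β := by rw [hβ, le_div_iff₀ hα0, one_mul]; exact hα1
  have hβ0 : (0 : ℝ) ≤ β := by linarith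
  set s : ℝ := δ ^ 2 / L with hs
  have hs0 : 0 < s := by positivity
  have hrs : δ ^ 2 / (2 * L) = s / 2 := by rw [hs]; ring
  set r : ℝ := (s / 2) ^ β with hrdef
  have hr0 : 0 < r := Real.rpow_pos_of_pos (by positivity) _
  -- lower bound on ε
  have hεlb : (s / 8) ^ β ≤ ε := by
    have h1 : s / 8 ≤ ε ^ α := by
      rw [hs, div_div, div_le_iff₀ (by positivity)]
      nlinarith [hδ2]
    have h2 : (s / 8) ^ β ≤ (ε ^ α) ^ β :=
      Real.rpow_le_rpow (by positivity) h1 hβ0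
    calc (s / 8) ^ β ≤ (ε ^ α) ^ β := h2
      _ = ε ^ (α * β) := (Real.rpow_mul hε.le α β).symm
      _ = ε ^ (1 : ℝ) := by rw [hβ, mul_one_div_cancel hα0.ne']
      _ = ε := Real.rpow_one ε
  have hεlb0 : 0 < (s / 8) ^ β := Real.rpow_pos_of_pos (by positivity) _
  -- main chain pieces
  have h3 : 3 * Rt / ε ≤ 3 * Rt * (8 / s) ^ β := by
    have hinv : 1 / ε ≤ (8 / s) ^ β := by
      have : (8 / s : ℝ) ^ β = ((s / 8) ^ β)⁻¹ := by
        rw [show (8 / s : ℝ) = (s / 8)⁻¹ by rw [inv_div], Real.inv_rpow (by positivity)]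
      rw [this, one_div]
      exact inv_anti₀ hεlb0 hεlb
    calc 3 * Rt / ε = 3 * Rt * (1 / ε) := by ring
      _ ≤ 3 * Rt * (8 / s) ^ β := by
          apply mul_le_mul_of_nonneg_left hinv (by positivity)
  have h6 : 6 * Rt / r = 6 * Rt * (2 / s) ^ β := by
    have : (2 / s : ℝ) ^ β = r⁻¹ := by
      rw [hrdef, show (2 / s : ℝ) = (s / 2)⁻¹ by rw [inv_div], Real.inv_rpow (by positivity)]
    rw [this]; ring
  have h49 : 3 * (8 : ℝ) ^ β + 6 * (2 : ℝ) ^ β ≤ (49 : ℝ) ^ β := by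
    have h490 : (0:ℝ) < (49:ℝ) ^ β := Real.rpow_pos_of_pos (by norm_num) _
    have h8 : (8 : ℝ) ^ β ≤ (49 : ℝ) ^ β * (8 / 49) := by
      have : (8 : ℝ) ^ β = (49 : ℝ) ^ β * (8 / 49 : ℝ) ^ β := by
        rw [← Real.mul_rpow (by norm_num) (by norm_num)]; norm_num
      rw [this]
      apply mul_le_mul_of_nonneg_left _ h490.le
      calc (8 / 49 : ℝ) ^ β ≤ (8 / 49 : ℝ) ^ (1:ℝ) :=
            Real.rpow_le_rpow_of_exponent_ge (by norm_num) (by norm_num) hβ1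
        _ = 8 / 49 := Real.rpow_one _
    have h2 : (2 : ℝ) ^ β ≤ (49 : ℝ) ^ β * (2 / 49) := by
      have : (2 : ℝ) ^ β = (49 : ℝ) ^ β * (2 / 49 : ℝ) ^ β := by
        rw [← Real.mul_rpow (by norm_num) (by norm_num)]; norm_num
      rw [this]
      apply mul_le_mul_of_nonneg_left _ h490.le
      calc (2 / 49 : ℝ) ^ β ≤ (2 / 49 : ℝ) ^ (1:ℝ) :=
            Real.rpow_le_rpow_of_exponent_ge (by norm_num) (by norm_num) hβ1
        _ = 2 / 49 := Real.rpow_one _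
    nlinarith
  -- rewrite RHS
  have hW : (7 * L ^ ((1 : ℝ) / 2) * Rt ^ (α / 2) / δ) ^ (2 / α)
      = 49 ^ β * Rt * (1 / s) ^ β := by
    have hWpos : (0:ℝ) ≤ 7 * L ^ ((1 : ℝ) / 2) * Rt ^ (α / 2) / δ := by positivity
    have h2α : (2 / α : ℝ) = ((2:ℕ):ℝ) * β := by rw [hβ]; push_cast; ring
    rw [h2α, Real.rpow_natCast_mul hWpos]
    have hL2 : (L ^ ((1:ℝ)/2)) ^ (2:ℕ) = L := by
      rw [← Real.rpow_natCast (L ^ ((1:ℝ)/2)) 2, ← Real.rpow_mul hL.le]; norm_num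
    have hR2 : (Rt ^ (α/2)) ^ (2:ℕ) = Rt ^ α := by
      rw [← Real.rpow_natCast (Rt ^ (α/2)) 2, ← Real.rpow_mul hRt.le]; norm_num
    have hW2 : (7 * L ^ ((1 : ℝ) / 2) * Rt ^ (α / 2) / δ) ^ (2:ℕ)
        = 49 * Rt ^ α * (1 / s) := by
      rw [div_pow, mul_pow, mul_pow, hL2, hR2, hs]
      field_simp
      ring
    rw [hW2, Real.mul_rpow (by positivity) (by positivity),
      Real.mul_rpow (by norm_num) (Real.rpow_nonneg hRt.le α),
      ← Real.rpow_mul hRt.le,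
      show α * β = 1 by rw [hβ]; field_simp, Real.rpow_one]
  rw [hW]
  -- combine
  have hstep1 : (1 + 2 * Rt / ε) * (1 + 2 * ε / r) ≤ 3 * Rt / ε + 6 * Rt / r := by
    have hfac1 : 1 + 2 * Rt / ε ≤ 3 * Rt / ε := by
      have h1ε : 1 ≤ Rt / ε := (one_le_div hε).2 hεR
      rw [mul_div_assoc, mul_div_assoc]
      linarith
    have hfac2 : (0:ℝ) ≤ 1 + 2 * ε / r := by positivity
    calc (1 + 2 * Rt / ε) * (1 + 2 * ε / r) ≤ (3 * Rt / ε) * (1 + 2 * ε / r) :=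
          mul_le_mul_of_nonneg_right hfac1 hfac2
      _ = 3 * Rt / ε + 6 * Rt / r := by field_simp; ring
  have h8s : (8 / s : ℝ) ^ β = 8 ^ β * (1 / s) ^ β := by
    rw [← Real.mul_rpow (by norm_num) (by positivity)]; congr 1; ring
  have h2s : (2 / s : ℝ) ^ β = 2 ^ β * (1 / s) ^ β := by
    rw [← Real.mul_rpow (by norm_num) (by positivity)]; congr 1; ring
  have h1s0 : (0:ℝ) ≤ (1 / s) ^ β := Real.rpow_nonneg (by positivity) _
  calc (1 + 2 * Rt / ε) * (1 + 2 * ε / ((δ ^ 2 / (2 * L)) ^ (1 / α)))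
      = (1 + 2 * Rt / ε) * (1 + 2 * ε / r) := by rw [hrs]
    _ ≤ 3 * Rt / ε + 6 * Rt / r := hstep1
    _ ≤ 3 * Rt * (8 / s) ^ β + 6 * Rt * (2 / s) ^ β := by rw [← h6]; linarith
    _ = Rt * ((3 * (8:ℝ) ^ β + 6 * (2:ℝ) ^ β) * (1 / s) ^ β) := by
        rw [h8s, h2s]; ring
    _ ≤ Rt * ((49:ℝ) ^ β * (1 / s) ^ β) := by
        apply mul_le_mul_of_nonneg_left _ hRt.le
        exact mul_le_mul_of_nonneg_right h49 h1s0
    _ = 49 ^ β * Rt * (1 / s) ^ β := by ring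



/-- The "discretization" kernel `c̃` associated with a kernel `c` and a map `ω`. -/
noncomputable def ctilde {E : Type*} (c : E → E → ℝ) (ω : E → E) (x y : E) : ℝ :=
  c (ω x) (ω y) - c (ω x) y - c x (ω y) + c x y

theorem stmt_10 (d : ℕ) (hd : 0 < d)
    (c : EuclideanSpace ℝ (Fin d) → EuclideanSpace ℝ (Fin d) → ℝ)
    (hsymm : ∀ x y, c x y = c y x)
    (L α : ℝ) (hL : 0 < L) (hα : α ∈ Set.Ioc (0 : ℝ) 1)
    (hc : ∀ x y z : EuclideanSpace ℝ (Fin d), |c x y - c x z| ≤ L * ‖y - z‖ ^ α)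
    (Rt : ℝ) (hRt : 0 < Rt) (ε : ℝ) (hε0 : 0 < ε) (hεR : ε ≤ Rt)
    (B : Finset (EuclideanSpace ℝ (Fin d)))
    (hBcard : (B.card : ℝ) ≤ (1 + 2 * Rt / ε) ^ d)
    (hBcover : ∀ x ∈ Metric.closedBall (0 : EuclideanSpace ℝ (Fin d)) Rt,
      ∃ b ∈ B, ‖x - b‖ ≤ ε)
    (ω : EuclideanSpace ℝ (Fin d) → EuclideanSpace ℝ (Fin d))
    (hωB : ∀ x ∈ Metric.closedBall (0 : EuclideanSpace ℝ (Fin d)) Rt, ω x ∈ B)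
    (hωnear : ∀ x ∈ Metric.closedBall (0 : EuclideanSpace ℝ (Fin d)) Rt,
      ∀ b ∈ B, ‖x - ω x‖ ≤ ‖x - b‖) :
    ∀ δ : ℝ, 0 < δ → δ ≤ Real.sqrt (8 * L * ε ^ α) →
      ∃ M : Finset (EuclideanSpace ℝ (Fin d)),
        (M.card : ℝ) ≤ (7 * L ^ ((1 : ℝ) / 2) * Rt ^ (α / 2) / δ) ^ (2 * (d : ℝ) / α) ∧
        ∀ x ∈ Metric.closedBall (0 : EuclideanSpace ℝ (Fin d)) Rt,
          ∃ y ∈ M,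
            Real.sqrt (ctilde c ω x x - 2 * ctilde c ω x y + ctilde c ω y y) ≤ δ := by
  intro δ hδ0 hδsqrt
  classical
  obtain ⟨hα0, hα1⟩ := hα
  have h8 : (0:ℝ) ≤ 8 * L * ε ^ α := by positivity
  have hδ2 : δ ^ 2 ≤ 8 * L * ε ^ α := by
    calc δ ^ 2 ≤ Real.sqrt (8 * L * ε ^ α) ^ 2 := pow_le_pow_left₀ hδ0.le hδsqrt 2
      _ = 8 * L * ε ^ α := Real.sq_sqrt h8
  set r : ℝ := (δ ^ 2 / (2 * L)) ^ ((1:ℝ) / α) with hrdef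
  have hr0 : 0 < r := Real.rpow_pos_of_pos (by positivity) _
  set A : EuclideanSpace ℝ (Fin d) → Set (EuclideanSpace ℝ (Fin d)) :=
    fun b => {z | z ∈ Metric.closedBall (0 : EuclideanSpace ℝ (Fin d)) Rt ∧ ω z = b} with hA
  have hAsub : ∀ b, A b ⊆ Metric.closedBall b ε := by
    intro b z hz
    obtain ⟨hz1, hz2⟩ := hz
    obtain ⟨b', hb'B, hb'⟩ := hBcover z hz1
    refine Metric.mem_closedBall.2 ?_
    rw [← hz2]
    calc dist z (ω z) = ‖z - ω z‖ := by rw [dist_eq_norm]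
      _ ≤ ‖z - b'‖ := hωnear z hz1 b' hb'B
      _ ≤ ε := hb'
  have hnet : ∀ b : EuclideanSpace ℝ (Fin d), ∃ t : Finset (EuclideanSpace ℝ (Fin d)),
      ↑t ⊆ A b ∧ (t.card : ℝ) ≤ (1 + 2 * ε / r) ^ d ∧ ∀ x ∈ A b, ∃ y ∈ t, dist x y ≤ r :=
    fun b => net_exists b hε0 hr0 (A b) (hAsub b)
  choose T hT1 hT2 hT3 using hnet
  have hrα : r ^ α = δ ^ 2 / (2 * L) := by
    rw [hrdef, ← Real.rpow_mul (by positivity : (0:ℝ) ≤ δ ^ 2 / (2 * L)),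
      one_div_mul_cancel hα0.ne', Real.rpow_one]
  refine ⟨B.biUnion T, ?_, ?_⟩
  · -- cardinality bound
    have hW0 : (0:ℝ) < 7 * L ^ ((1 : ℝ) / 2) * Rt ^ (α / 2) / δ := by
      apply div_pos _ hδ0
      have := Real.rpow_pos_of_pos hL ((1:ℝ)/2)
      have := Real.rpow_pos_of_pos hRt (α/2)
      positivity
    have hnum := num_ineq hL hα0 hα1 hε0 hεR hδ0 hδ2
    have hpos2 : (0:ℝ) ≤ (1 + 2 * ε / r) ^ d := by positivity
    calc ((B.biUnion T).card : ℝ)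
        ≤ ((∑ b ∈ B, (T b).card : ℕ) : ℝ) := by exact_mod_cast Finset.card_biUnion_le
      _ = ∑ b ∈ B, ((T b).card : ℝ) := by push_cast; rfl
      _ ≤ ∑ b ∈ B, (1 + 2 * ε / r) ^ d := Finset.sum_le_sum fun b _ => hT2 b
      _ = (B.card : ℝ) * (1 + 2 * ε / r) ^ d := by rw [Finset.sum_const, nsmul_eq_mul]
      _ ≤ (1 + 2 * Rt / ε) ^ d * (1 + 2 * ε / r) ^ d :=
          mul_le_mul_of_nonneg_right hBcard hpos2
      _ = ((1 + 2 * Rt / ε) * (1 + 2 * ε / r)) ^ d := (mul_pow _ _ _).symm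
      _ ≤ ((7 * L ^ ((1 : ℝ) / 2) * Rt ^ (α / 2) / δ) ^ ((2:ℝ) / α)) ^ d := by
          apply pow_le_pow_left₀ (by positivity) _ d
          exact hnum
      _ = (7 * L ^ ((1 : ℝ) / 2) * Rt ^ (α / 2) / δ) ^ (2 * (d : ℝ) / α) := by
          rw [← Real.rpow_natCast ((7 * L ^ ((1 : ℝ) / 2) * Rt ^ (α / 2) / δ) ^ ((2:ℝ)/α)) d,
            ← Real.rpow_mul hW0.le]
          congr 1
          ring
  · -- covering
    intro x hx
    have hxA : x ∈ A (ω x) := ⟨hx, rfl⟩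
    obtain ⟨y, hyT, hxy⟩ := hT3 (ω x) x hxA
    have hyA : y ∈ A (ω x) := hT1 (ω x) hyT
    refine ⟨y, Finset.mem_biUnion.2 ⟨ω x, hωB x hx, hyT⟩, ?_⟩
    have hωy : ω y = ω x := hyA.2
    have hkey : ctilde c ω x x - 2 * ctilde c ω x y + ctilde c ω y y
        = (c x x - c x y) + (c y y - c y x) := by
      unfold ctilde
      rw [hωy]
      linear_combination hsymm y x + hsymm x (ω x) + hsymm (ω x) y
    have e1 : c x x - c x y ≤ L * ‖x - y‖ ^ α := le_trans (le_abs_self _) (hc x x y)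
    have e2 : c y y - c y x ≤ L * ‖y - x‖ ^ α := le_trans (le_abs_self _) (hc y y x)
    have hnorm : ‖y - x‖ = ‖x - y‖ := norm_sub_rev y x
    have hxyr : ‖x - y‖ ^ α ≤ r ^ α := by
      apply Real.rpow_le_rpow (norm_nonneg _) _ hα0.le
      rw [← dist_eq_norm]
      exact hxy
    have hest : ctilde c ω x x - 2 * ctilde c ω x y + ctilde c ω y y ≤ δ ^ 2 := by
      rw [hkey]
      have : L * ‖x - y‖ ^ α ≤ L * (δ ^ 2 / (2 * L)) := by
        apply mul_le_mul_of_nonneg_left _ hL.le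
        rw [← hrα]; exact hxyr
      have hLδ : L * (δ ^ 2 / (2 * L)) = δ ^ 2 / 2 := by field_simp
      rw [hnorm] at e2
      nlinarith
    calc Real.sqrt (ctilde c ω x x - 2 * ctilde c ω x y + ctilde c ω y y)
        ≤ Real.sqrt (δ ^ 2) := Real.sqrt_le_sqrt hest
      _ = δ := Real.sqrt_sq hδ0.le
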